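/- For every K ≥ 1 and every i ∈ {1,…,m}, the cumulative constraint values are bounded by the final dual variable: Σ_{k=1}^{K} v_{k,i} ≤ λ_{K,i}/η' ≤ ‖λ_K‖/η', where ‖·‖ is the Euclidean norm on ℝ^m. (The telescoping bound (cvb-st-1) proved in the constraint-violation part of Theorem 1 of the paper.) -/

import Mathlib

lemma coord_le_norm {m : ℕ} (x : EuclideanSpace ℝ (Fin m)) (i : Fin m) :
    x i ≤ ‖x‖ := by
  calc x i ≤ |x i| := le_abs_self _
  _ = Real.sqrt ((x i)^2) := (Real.sqrt_sq_eq_abs _).symm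
  _ ≤ ‖x‖ := by
    rw [EuclideanSpace.norm_eq]
    apply Real.sqrt_le_sqrt
    have := Finset.single_le_sum (f := fun j => ‖x j‖^2)
      (fun j _ => by positivity) (Finset.mem_univ i)
    simpa [Real.norm_eq_abs, sq_abs] using this

/-- The telescoping bound (cvb-st-1): cumulative constraint values are bounded by
the final dual variable. -/
theorem cumulative_constraint_bound (m : ℕ) (hm : 1 ≤ m) (η' : ℝ) (hη' : 0 < η')
    (v lam : ℕ → EuclideanSpace ℝ (Fin m))
    (h0 : ∀ i, lam 0 i = max 0 (-η' * v 0 i))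
    (hrec : ∀ k i, lam (k + 1) i = max (-η' * v (k + 1) i) (lam k i + η' * v (k + 1) i)) :
    ∀ K, 1 ≤ K → ∀ i,
      (∑ k ∈ Finset.Icc 1 K, v k i) ≤ lam K i / η' ∧ lam K i / η' ≤ ‖lam K‖ / η' := by
  have hnn : ∀ k i, 0 ≤ lam k i := by
    intro k
    induction k with
    | zero => intro i; rw [h0 i]; exact le_max_left _ _
    | succ k ih =>
      intro i
      rw [hrec k i]
      have : lam k i / 2 ≤ max (-η' * v (k + 1) i) (lam k i + η' * v (k + 1) i) := by
        have h1 := le_max_left (-η' * v (k + 1) i) (lam k i + η' * v (k + 1) i)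
        have h2 := le_max_right (-η' * v (k + 1) i) (lam k i + η' * v (k + 1) i)
        nlinarith
      have := ih i
      linarith
  have key : ∀ K, 1 ≤ K → ∀ i, η' * (∑ k ∈ Finset.Icc 1 K, v k i) ≤ lam K i := by
    intro K
    induction K with
    | zero => omega
    | succ K ih =>
      intro _ i
      rcases Nat.eq_or_lt_of_le (Nat.one_le_iff_ne_zero.mpr (by omega) :
          (1 : ℕ) ≤ K + 1) with h | h
      · have hK : K = 0 := by omega
        subst hK
        simp only [Finset.Icc_self, Finset.sum_singleton]
        rw [hrec 0 i]
        have := hnn 0 i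
        have h2 := le_max_right (-η' * v 1 i) (lam 0 i + η' * v 1 i)
        linarith
      · have hK : 1 ≤ K := by omega
        have hsum : ∑ k ∈ Finset.Icc 1 (K+1), v k i
            = (∑ k ∈ Finset.Icc 1 K, v k i) + v (K+1) i := by
          rw [← Finset.sum_Icc_succ_top (by omega : 1 ≤ K + 1)]
        rw [hsum, hrec K i]
        have h2 := le_max_right (-η' * v (K + 1) i) (lam K i + η' * v (K + 1) i)
        have := ih hK i
        nlinarith
  intro K hK i
  constructor
  · rw [le_div_iff₀ hη', mul_comm]
    exact key K hK i
  · exact div_le_div_of_nonneg_right (c := η') (coord_le_norm _ i) hη'.le
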